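/- Let μ_1,...,μ_n ∈ ℂ be pairwise distinct, Z^i_j := e^i_j - e^j_j (elementary matrix notation), and r_0 := Σ_{i<j} (1/(μ_i-μ_j)) (Z^i_j ⊗ Z^j_i - Z^j_i ⊗ Z^i_j) acting on ℂ^n⊗ℂ^n. Then r_0² = 0. -/

import Mathlib

open Matrix Kronecker BigOperators Finset

noncomputable section


/-- `Z^i_j = e^i_j - e^j_j`. -/
def Zmat (n : ℕ) (i j : Fin n) : Matrix (Fin n) (Fin n) ℂ :=
  single i j 1 - single j j 1

/-- The skew-symmetric rime r-matrix
`r₀ = Σ_{i<j} (μ_i-μ_j)⁻¹ (Z^i_j ⊗ Z^j_i - Z^j_i ⊗ Z^i_j)` as an operator on ℂⁿ⊗ℂⁿ. -/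
def rZero (n : ℕ) (μ : Fin n → ℂ) : Matrix (Fin n × Fin n) (Fin n × Fin n) ℂ :=
  ∑ i : Fin n, ∑ j : Fin n, if i < j then
    (μ i - μ j)⁻¹ • (Zmat n i j ⊗ₖ Zmat n j i - Zmat n j i ⊗ₖ Zmat n i j) else 0

lemma Zmat_apply (n : ℕ) (i j a b : Fin n) :
    Zmat n i j a b = (if i = a ∧ j = b then (1:ℂ) else 0) -
      (if j = a ∧ j = b then (1:ℂ) else 0) := by
  simp [Zmat, Matrix.single, Matrix.sub_apply]

lemma rZero_apply (n : ℕ) (μ : Fin n → ℂ) (a c b d : Fin n) :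
    rZero n μ (a, c) (b, d) =
      if b = d then 0 else
        (μ d - μ b)⁻¹ * (((if d = a then (1:ℂ) else 0) - (if b = a then 1 else 0)) *
          ((if b = c then (1:ℂ) else 0) - (if d = c then 1 else 0))) := by
  rw [rZero]
  simp only [Matrix.sum_apply]
  have key : ∀ i j : Fin n,
      (if i < j then (μ i - μ j)⁻¹ • (Zmat n i j ⊗ₖ Zmat n j i - Zmat n j i ⊗ₖ Zmat n i j)
        else 0) (a, c) (b, d)
      = if i < j then (μ i - μ j)⁻¹ *
          (Zmat n i j a b * Zmat n j i c d - Zmat n j i a b * Zmat n i j c d) else 0 := by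
    intro i j
    split_ifs with h
    · simp [Matrix.smul_apply, Matrix.sub_apply, Matrix.kroneckerMap_apply, smul_eq_mul,
        mul_sub]
    · rfl
  simp only [key]
  by_cases hbd : b = d
  · subst hbd
    rw [if_pos rfl]
    refine Finset.sum_eq_zero fun i _ => Finset.sum_eq_zero fun j _ => ?_
    split_ifs with h
    · have h1 : Zmat n i j a b * Zmat n j i c b = 0 := by
        rcases eq_or_ne j b with rfl | hj
        · have : Zmat n j i c j = 0 := by simp [Zmat_apply, h.ne, h.ne']
          rw [this, mul_zero]
        · have : Zmat n i j a b = 0 := by simp [Zmat_apply, hj]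
          rw [this, zero_mul]
      have h2 : Zmat n j i a b * Zmat n i j c b = 0 := by
        rcases eq_or_ne i b with rfl | hi
        · have : Zmat n i j c i = 0 := by simp [Zmat_apply, h.ne, h.ne']
          rw [this, mul_zero]
        · have : Zmat n j i a b = 0 := by simp [Zmat_apply, hi]
          rw [this, zero_mul]
      rw [h1, h2, sub_zero, mul_zero]
    · rfl
  · rw [if_neg hbd]
    rw [Finset.sum_eq_add d b (Ne.symm hbd)
      (fun i _ hi => Finset.sum_eq_zero fun j _ => by
        split_ifs with h
        · have h1 : Zmat n j i c d = 0 := by simp [Zmat_apply, hi.1]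
          have h2 : Zmat n j i a b = 0 := by simp [Zmat_apply, hi.2]
          rw [h1, h2, mul_zero, zero_mul, sub_zero, mul_zero]
        · rfl)
      (by simp) (by simp)]
    rw [Finset.sum_eq_single b
      (fun j _ hj => by
        split_ifs with h
        · have h1 : Zmat n d j a b = 0 := by simp [Zmat_apply, hj]
          have h2 : Zmat n d j c d = 0 := by simp [Zmat_apply, h.ne']
          rw [h1, h2, zero_mul, mul_zero, sub_zero, mul_zero]
        · rfl)
      (by simp)]
    rw [Finset.sum_eq_single d
      (fun j _ hj => by
        split_ifs with h
        · have h1 : Zmat n j b c d = 0 := by simp [Zmat_apply, hbd]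
          have h2 : Zmat n b j c d = 0 := by simp [Zmat_apply, hj]
          rw [h1, h2, mul_zero, mul_zero, sub_zero, mul_zero]
        · rfl)
      (by simp)]
    rcases (Ne.lt_or_gt (Ne.symm hbd)) with h | h
    · -- d < b
      rw [if_pos h, if_neg (lt_asymm h), add_zero]
      simp only [Zmat_apply, hbd, Ne.symm hbd, and_true, and_false, and_self, if_false,
        if_true, sub_zero]
      ring
    · -- b < d
      rw [if_neg (lt_asymm h), if_pos h, zero_add]
      simp only [Zmat_apply, hbd, Ne.symm hbd, and_true, and_false, and_self, if_false,
        if_true, sub_zero]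
      rw [show μ b - μ d = -(μ d - μ b) by ring, inv_neg]
      ring

/-- The skew-symmetric rime r-matrix is nilpotent: `r₀² = 0`. -/
theorem rZero_sq_eq_zero (n : ℕ) (μ : Fin n → ℂ) (hd : ∀ i j, i ≠ j → μ i ≠ μ j) :
    rZero n μ * rZero n μ = 0 := by
  ext ⟨a, c⟩ ⟨e, f⟩
  rw [Matrix.mul_apply, Matrix.zero_apply, Fintype.sum_prod_type]
  by_cases hef : e = f
  · subst hef
    refine Finset.sum_eq_zero fun b _ => Finset.sum_eq_zero fun d _ => ?_
    rw [rZero_apply n μ b d e e, if_pos rfl, mul_zero]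
  · rw [Finset.sum_eq_add e f hef
      (fun b _ hb => Finset.sum_eq_zero fun d _ => by
        have : rZero n μ (b, d) (e, f) = 0 := by
          rw [rZero_apply, if_neg hef]
          simp [Ne.symm hb.1, Ne.symm hb.2]
        rw [this, mul_zero])
      (by simp) (by simp)]
    rw [Finset.sum_eq_single f
      (fun d _ hd' => by
        rcases eq_or_ne d e with hde | hde
        · rw [rZero_apply n μ a c e d, if_pos hde.symm, zero_mul]
        · have : rZero n μ (e, d) (e, f) = 0 := by
            rw [rZero_apply, if_neg hef]
            simp [Ne.symm hde, Ne.symm hd']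
          rw [this, mul_zero])
      (by simp)]
    rw [Finset.sum_eq_single e
      (fun d _ hd' => by
        rcases eq_or_ne d f with hdf | hdf
        · rw [rZero_apply n μ a c f d, if_pos hdf.symm, zero_mul]
        · have : rZero n μ (f, d) (e, f) = 0 := by
            rw [rZero_apply, if_neg hef]
            simp [Ne.symm hd', Ne.symm hdf]
          rw [this, mul_zero])
      (by simp)]
    rw [rZero_apply n μ a c e f, rZero_apply n μ e f e f, rZero_apply n μ a c f e,
      rZero_apply n μ f e e f]
    rw [if_neg hef, if_neg hef, if_neg (Ne.symm hef), if_neg hef]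
    simp only [if_pos rfl, hef, Ne.symm hef, if_false, if_true]
    rw [show μ e - μ f = -(μ f - μ e) by ring, inv_neg]
    ring
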